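/- Let (X, r) be a near-rack solution with r(x,y) = (σ_x(y), τ(x)). If r(x, τ(x)) = (x, τ(x)) for some x ∈ X, then r(τ(x), x) = (τ(x), x). -/
import Mathlib


def rFst {X : Type*} (r : X × X → X × X) : X × X × X → X × X × X :=
  fun p => ((r (p.1, p.2.1)).1, (r (p.1, p.2.1)).2, p.2.2)

def rSnd {X : Type*} (r : X × X → X × X) : X × X × X → X × X × X :=
  fun p => (p.1, r (p.2.1, p.2.2))

def IsYB {X : Type*} (r : X × X → X × X) : Prop :=
  rFst r ∘ rSnd r ∘ rFst r = rSnd r ∘ rFst r ∘ rSnd r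

/-- `(X, r)` is a near-rack solution of the Yang–Baxter equation with data `σ, τ`:
a non-degenerate set-theoretic solution of the form `r (x, y) = (σ x y, τ x)`
with `τ ≠ id` and `τ² = id`. -/
structure IsNearRackSolution {X : Type*} (r : X × X → X × X)
    (σ : X → X → X) (τ : X → X) : Prop where
  hr : ∀ x y : X, r (x, y) = (σ x y, τ x)
  hYB : IsYB r
  hrbij : Function.Bijective r
  hσbij : ∀ x : X, Function.Bijective (σ x)
  hτbij : Function.Bijective τ
  hτ2 : τ ∘ τ = id
  hτne : τ ≠ id

theorem stmt3 {X : Type*} (r : X × X → X × X) (σ : X → X → X) (τ : X → X)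
    (h : IsNearRackSolution r σ τ) (x : X)
    (hx : r (x, τ x) = (x, τ x)) :
    r (τ x, x) = (τ x, x) := by
  have hr := h.hr
  have hτ2 : τ (τ x) = x := congrFun h.hτ2 x
  have hσx : σ x (τ x) = x := by
    have := hx.symm.trans (hr x (τ x))
    exact (Prod.mk.injEq _ _ _ _).mp this.symm |>.1
  have hYB := congrFun h.hYB (x, τ x, x)
  simp only [IsYB, rFst, rSnd, Function.comp_apply, hr, hσx, hτ2] at hYB
  have hkey : τ x = σ (τ x) x := congrArg (fun p => p.2.1) hYB
  rw [hr, ← hkey, hτ2]
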